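/- Let A : ℝ⁷ → ℝ⁷ be a linear map such that φ₀(Au, Av, Aw) = φ₀(u, v, w) for all u, v, w ∈ ℝ⁷. Then A also preserves the 4-form ψ₀ = *φ₀, i.e. ψ₀(Au, Av, Aw, Ax) = ψ₀(u, v, w, x) for all u, v, w, x ∈ ℝ⁷, where ψ₀ := e⁴⁵⁶⁷ + e²³⁶⁷ + e²³⁴⁵ + e¹³⁵⁷ − e¹³⁴⁶ − e¹²⁵⁶ − e¹²⁴⁷. -/

import Mathlib

/-- `e^{ijk}(u,v,w)`: the `3×3` minor determinant of the `(i,j,k)` coordinates. -/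
def e3 (i j k : Fin 7) (u v w : Fin 7 → ℝ) : ℝ :=
  Matrix.det !![u i, u j, u k; v i, v j, v k; w i, w j, w k]

/-- The standard `G₂` 3-form
`φ₀ = e¹²³ + e¹⁴⁵ + e¹⁶⁷ + e²⁴⁶ − e²⁵⁷ − e³⁴⁷ − e³⁵⁶` (0-indexed). -/
def phi0 (u v w : Fin 7 → ℝ) : ℝ :=
  e3 0 1 2 u v w + e3 0 3 4 u v w + e3 0 5 6 u v w + e3 1 3 5 u v w
    - e3 1 4 6 u v w - e3 2 3 6 u v w - e3 2 4 5 u v w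

/-- `e^{ijkl}(u,v,w,x)`: the `4×4` minor determinant of the `(i,j,k,l)` coordinates. -/
def e4 (i j k l : Fin 7) (u v w x : Fin 7 → ℝ) : ℝ :=
  Matrix.det !![u i, u j, u k, u l; v i, v j, v k, v l;
                w i, w j, w k, w l; x i, x j, x k, x l]

/-- The 4-form `ψ₀ = *φ₀ = e⁴⁵⁶⁷ + e²³⁶⁷ + e²³⁴⁵ + e¹³⁵⁷ − e¹³⁴⁶ − e¹²⁵⁶ − e¹²⁴⁷`
(0-indexed). -/
def psi0 (u v w x : Fin 7 → ℝ) : ℝ :=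
  e4 3 4 5 6 u v w x + e4 1 2 5 6 u v w x + e4 1 2 3 4 u v w x
    + e4 0 2 4 6 u v w x - e4 0 2 3 5 u v w x - e4 0 1 4 5 u v w x
    - e4 0 1 3 6 u v w x

noncomputable section G2Aux

def dotp (u v : Fin 7 → ℝ) : ℝ :=
  u 0 * v 0 + u 1 * v 1 + u 2 * v 2 + u 3 * v 3 + u 4 * v 4 + u 5 * v 5 + u 6 * v 6

def ee (i : Fin 7) : Fin 7 → ℝ := fun j => if j = i then 1 else 0

def crossp (u v : Fin 7 → ℝ) : Fin 7 → ℝ := fun k =>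
  if k = 0 then u 1 * v 2 - u 2 * v 1 + u 3 * v 4 - u 4 * v 3 + u 5 * v 6 - u 6 * v 5 else
  if k = 1 then -(u 0 * v 2 - u 2 * v 0) + u 3 * v 5 - u 5 * v 3 + -(u 4 * v 6 - u 6 * v 4) else
  if k = 2 then u 0 * v 1 - u 1 * v 0 + -(u 3 * v 6 - u 6 * v 3) + -(u 4 * v 5 - u 5 * v 4) else
  if k = 3 then -(u 0 * v 4 - u 4 * v 0) + -(u 1 * v 5 - u 5 * v 1) + u 2 * v 6 - u 6 * v 2 else
  if k = 4 then u 0 * v 3 - u 3 * v 0 + u 1 * v 6 - u 6 * v 1 + u 2 * v 5 - u 5 * v 2 else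
  if k = 5 then -(u 0 * v 6 - u 6 * v 0) + u 1 * v 3 - u 3 * v 1 + -(u 2 * v 4 - u 4 * v 2) else
  u 0 * v 5 - u 5 * v 0 + -(u 1 * v 4 - u 4 * v 1) + -(u 2 * v 3 - u 3 * v 2)

theorem phi0_expand (u v w : Fin 7 → ℝ) : phi0 u v w = (u 0 * (v 1 * w 2 - v 2 * w 1) - u 1 * (v 0 * w 2 - v 2 * w 0) + u 2 * (v 0 * w 1 - v 1 * w 0)) + (u 0 * (v 3 * w 4 - v 4 * w 3) - u 3 * (v 0 * w 4 - v 4 * w 0) + u 4 * (v 0 * w 3 - v 3 * w 0)) + (u 0 * (v 5 * w 6 - v 6 * w 5) - u 5 * (v 0 * w 6 - v 6 * w 0) + u 6 * (v 0 * w 5 - v 5 * w 0)) + (u 1 * (v 3 * w 5 - v 5 * w 3) - u 3 * (v 1 * w 5 - v 5 * w 1) + u 5 * (v 1 * w 3 - v 3 * w 1)) - (u 1 * (v 4 * w 6 - v 6 * w 4) - u 4 * (v 1 * w 6 - v 6 * w 1) + u 6 * (v 1 * w 4 - v 4 * w 1)) - (u 2 * (v 3 * w 6 - v 6 * w 3)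 - u 3 * (v 2 * w 6 - v 6 * w 2) + u 6 * (v 2 * w 3 - v 3 * w 2)) - (u 2 * (v 4 * w 5 - v 5 * w 4) - u 4 * (v 2 * w 5 - v 5 * w 2) + u 5 * (v 2 * w 4 - v 4 * w 2)) := by
  simp [phi0, e3, Matrix.det_fin_three]; ring

set_option maxHeartbeats 800000 in
theorem det4 (M : Matrix (Fin 4) (Fin 4) ℝ) : M.det = M 0 0 * M 1 1 * M 2 2 * M 3 3 - M 0 0 * M 1 1 * M 2 3 * M 3 2 - M 0 0 * M 1 2 * M 2 1 * M 3 3 + M 0 0 * M 1 2 * M 2 3 * M 3 1 + M 0 0 * M 1 3 * M 2 1 * M 3 2 - M 0 0 * M 1 3 * M 2 2 * M 3 1 - M 0 1 * M 1 0 * M 2 2 * M 3 3 + M 0 1 * M 1 0 * M 2 3 * M 3 2 + M 0 1 * M 1 2 * M 2 0 * M 3 3 - M 0 1 * M 1 2 * M 2 3 * M 3 0 - M 0 1 * M 1 3 * M 2 0 * M 3 2 + M 0 1 * M 1 3 * M 2 2 * M 3 0 + M 0 2 * M 1 0 * M 2 1 * M 3 3 - M 0 2 * M 1 0 * M 2 3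 * M 3 1 - M 0 2 * M 1 1 * M 2 0 * M 3 3 + M 0 2 * M 1 1 * M 2 3 * M 3 0 + M 0 2 * M 1 3 * M 2 0 * M 3 1 - M 0 2 * M 1 3 * M 2 1 * M 3 0 - M 0 3 * M 1 0 * M 2 1 * M 3 2 + M 0 3 * M 1 0 * M 2 2 * M 3 1 + M 0 3 * M 1 1 * M 2 0 * M 3 2 - M 0 3 * M 1 1 * M 2 2 * M 3 0 - M 0 3 * M 1 2 * M 2 0 * M 3 1 + M 0 3 * M 1 2 * M 2 1 * M 3 0 := by
  simp [Matrix.det_succ_row_zero, Fin.sum_univ_succ, Fin.succAbove]; ring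

set_option maxHeartbeats 800000 in
theorem psi0_expand (u v w x : Fin 7 → ℝ) : psi0 u v w x = u 3 * v 4 * w 5 * x 6 - u 3 * v 4 * w 6 * x 5 - u 3 * v 5 * w 4 * x 6 + u 3 * v 5 * w 6 * x 4 + u 3 * v 6 * w 4 * x 5 - u 3 * v 6 * w 5 * x 4 - u 4 * v 3 * w 5 * x 6 + u 4 * v 3 * w 6 * x 5 + u 4 * v 5 * w 3 * x 6 - u 4 * v 5 * w 6 * x 3 - u 4 * v 6 * w 3 * x 5 + u 4 * v 6 * w 5 * x 3 + u 5 * v 3 * w 4 * x 6 - u 5 * v 3 * w 6 * x 4 - u 5 * v 4 * w 3 * x 6 + u 5 * v 4 * w 6 * x 3 + u 5 * v 6 * w 3 * x 4 - u 5 * v 6 * w 4 * x 3 - u 6 * v 3 * w 4 * x 5 + u 6 * v 3 * w 5 * x 4 + u 6 * v 4 * w 3 * x 5 - u 6 * v 4 * w 5 * x 3 - u 6 * v 5 * w 3 * x 4 + u 6 * v 5 * w 4 * x 3 + u 1 * v 2 * w 5 * x 6 - u 1 * v 2 * w 6 * x 5 - u 1 * v 5 * w 2 * x 6 + u 1 *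 v 5 * w 6 * x 2 + u 1 * v 6 * w 2 * x 5 - u 1 * v 6 * w 5 * x 2 - u 2 * v 1 * w 5 * x 6 + u 2 * v 1 * w 6 * x 5 + u 2 * v 5 * w 1 * x 6 - u 2 * v 5 * w 6 * x 1 - u 2 * v 6 * w 1 * x 5 + u 2 * v 6 * w 5 * x 1 + u 5 * v 1 * w 2 * x 6 - u 5 * v 1 * w 6 * x 2 - u 5 * v 2 * w 1 * x 6 + u 5 * v 2 * w 6 * x 1 + u 5 * v 6 * w 1 * x 2 - u 5 * v 6 * w 2 * x 1 - u 6 * v 1 * w 2 * x 5 + u 6 * v 1 * w 5 * x 2 + u 6 * v 2 * w 1 * x 5 - u 6 * v 2 * w 5 * x 1 - u 6 * v 5 * w 1 * x 2 + u 6 * v 5 * w 2 * x 1 + u 1 * v 2 * w 3 * x 4 - u 1 * v 2 * w 4 * x 3 - u 1 * v 3 * w 2 * x 4 + u 1 * v 3 * w 4 * x 2 + u 1 * v 4 * w 2 * x 3 - u 1 * v 4 * w 3 * x 2 - u 2 * v 1 * w 3 * x 4 + u 2 * v 1 * w 4 * x 3 + u 2 * v 3 * w 1 * x 4 - u 2 *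 v 3 * w 4 * x 1 - u 2 * v 4 * w 1 * x 3 + u 2 * v 4 * w 3 * x 1 + u 3 * v 1 * w 2 * x 4 - u 3 * v 1 * w 4 * x 2 - u 3 * v 2 * w 1 * x 4 + u 3 * v 2 * w 4 * x 1 + u 3 * v 4 * w 1 * x 2 - u 3 * v 4 * w 2 * x 1 - u 4 * v 1 * w 2 * x 3 + u 4 * v 1 * w 3 * x 2 + u 4 * v 2 * w 1 * x 3 - u 4 * v 2 * w 3 * x 1 - u 4 * v 3 * w 1 * x 2 + u 4 * v 3 * w 2 * x 1 + u 0 * v 2 * w 4 * x 6 - u 0 * v 2 * w 6 * x 4 - u 0 * v 4 * w 2 * x 6 + u 0 * v 4 * w 6 * x 2 + u 0 * v 6 * w 2 * x 4 - u 0 * v 6 * w 4 * x 2 - u 2 * v 0 * w 4 * x 6 + u 2 * v 0 * w 6 * x 4 + u 2 * v 4 * w 0 * x 6 - u 2 * v 4 * w 6 * x 0 - u 2 * v 6 * w 0 * x 4 + u 2 * v 6 * w 4 * x 0 + u 4 * v 0 * w 2 * x 6 - u 4 * v 0 * w 6 * x 2 - u 4 * v 2 * w 0 * x 6 + u 4 *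 v 2 * w 6 * x 0 + u 4 * v 6 * w 0 * x 2 - u 4 * v 6 * w 2 * x 0 - u 6 * v 0 * w 2 * x 4 + u 6 * v 0 * w 4 * x 2 + u 6 * v 2 * w 0 * x 4 - u 6 * v 2 * w 4 * x 0 - u 6 * v 4 * w 0 * x 2 + u 6 * v 4 * w 2 * x 0 - u 0 * v 2 * w 3 * x 5 + u 0 * v 2 * w 5 * x 3 + u 0 * v 3 * w 2 * x 5 - u 0 * v 3 * w 5 * x 2 - u 0 * v 5 * w 2 * x 3 + u 0 * v 5 * w 3 * x 2 + u 2 * v 0 * w 3 * x 5 - u 2 * v 0 * w 5 * x 3 - u 2 * v 3 * w 0 * x 5 + u 2 * v 3 * w 5 * x 0 + u 2 * v 5 * w 0 * x 3 - u 2 * v 5 * w 3 * x 0 - u 3 * v 0 * w 2 * x 5 + u 3 * v 0 * w 5 * x 2 + u 3 * v 2 * w 0 * x 5 - u 3 * v 2 * w 5 * x 0 - u 3 * v 5 * w 0 * x 2 + u 3 * v 5 * w 2 * x 0 + u 5 * v 0 * w 2 * x 3 - u 5 * v 0 * w 3 * x 2 - u 5 * v 2 * w 0 * x 3 + u 5 *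 v 2 * w 3 * x 0 + u 5 * v 3 * w 0 * x 2 - u 5 * v 3 * w 2 * x 0 - u 0 * v 1 * w 4 * x 5 + u 0 * v 1 * w 5 * x 4 + u 0 * v 4 * w 1 * x 5 - u 0 * v 4 * w 5 * x 1 - u 0 * v 5 * w 1 * x 4 + u 0 * v 5 * w 4 * x 1 + u 1 * v 0 * w 4 * x 5 - u 1 * v 0 * w 5 * x 4 - u 1 * v 4 * w 0 * x 5 + u 1 * v 4 * w 5 * x 0 + u 1 * v 5 * w 0 * x 4 - u 1 * v 5 * w 4 * x 0 - u 4 * v 0 * w 1 * x 5 + u 4 * v 0 * w 5 * x 1 + u 4 * v 1 * w 0 * x 5 - u 4 * v 1 * w 5 * x 0 - u 4 * v 5 * w 0 * x 1 + u 4 * v 5 * w 1 * x 0 + u 5 * v 0 * w 1 * x 4 - u 5 * v 0 * w 4 * x 1 - u 5 * v 1 * w 0 * x 4 + u 5 * v 1 * w 4 * x 0 + u 5 * v 4 * w 0 * x 1 - u 5 * v 4 * w 1 * x 0 - u 0 * v 1 * w 3 * x 6 + u 0 * v 1 * w 6 * x 3 + u 0 * v 3 * w 1 * x 6 - u 0 *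 v 3 * w 6 * x 1 - u 0 * v 6 * w 1 * x 3 + u 0 * v 6 * w 3 * x 1 + u 1 * v 0 * w 3 * x 6 - u 1 * v 0 * w 6 * x 3 - u 1 * v 3 * w 0 * x 6 + u 1 * v 3 * w 6 * x 0 + u 1 * v 6 * w 0 * x 3 - u 1 * v 6 * w 3 * x 0 - u 3 * v 0 * w 1 * x 6 + u 3 * v 0 * w 6 * x 1 + u 3 * v 1 * w 0 * x 6 - u 3 * v 1 * w 6 * x 0 - u 3 * v 6 * w 0 * x 1 + u 3 * v 6 * w 1 * x 0 + u 6 * v 0 * w 1 * x 3 - u 6 * v 0 * w 3 * x 1 - u 6 * v 1 * w 0 * x 3 + u 6 * v 1 * w 3 * x 0 + u 6 * v 3 * w 0 * x 1 - u 6 * v 3 * w 1 * x 0 := by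
  simp [psi0, e4, det4]; ring

theorem phi0_add1 (x y b c : Fin 7 → ℝ) : phi0 (x + y) b c = phi0 x b c + phi0 y b c := by
  simp only [phi0_expand, Pi.add_apply]; ring
theorem phi0_add2 (a x y c : Fin 7 → ℝ) : phi0 a (x + y) c = phi0 a x c + phi0 a y c := by
  simp only [phi0_expand, Pi.add_apply]; ring
theorem phi0_add3 (a b x y : Fin 7 → ℝ) : phi0 a b (x + y) = phi0 a b x + phi0 a b y := by
  simp only [phi0_expand, Pi.add_apply]; ring
theorem phi0_smul1 (r : ℝ) (x b c : Fin 7 → ℝ) : phi0 (r • x) b c = r * phi0 x b c := by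
  simp only [phi0_expand, Pi.smul_apply, smul_eq_mul]; ring
theorem phi0_smul2 (r : ℝ) (a x c : Fin 7 → ℝ) : phi0 a (r • x) c = r * phi0 a x c := by
  simp only [phi0_expand, Pi.smul_apply, smul_eq_mul]; ring
theorem phi0_smul3 (r : ℝ) (a b x : Fin 7 → ℝ) : phi0 a b (r • x) = r * phi0 a b x := by
  simp only [phi0_expand, Pi.smul_apply, smul_eq_mul]; ring
theorem phi0_swap12 (a b c : Fin 7 → ℝ) : phi0 b a c = -phi0 a b c := by
  simp only [phi0_expand]; ring
theorem phi0_swap23 (a b c : Fin 7 → ℝ) : phi0 a c b = -phi0 a b c := by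
  simp only [phi0_expand]; ring

def alphaf (u v x y z w : Fin 7 → ℝ) : ℝ :=
  phi0 u x y * phi0 v z w - phi0 u x z * phi0 v y w + phi0 u x w * phi0 v y z
    + phi0 u y z * phi0 v x w - phi0 u y w * phi0 v x z + phi0 u z w * phi0 v x y

theorem alpha_swap1 (u v x y z w : Fin 7 → ℝ) : alphaf u v y x z w = -alphaf u v x y z w := by
  simp only [alphaf]
  linear_combination (phi0 v z w) * (phi0_swap23 u x y) + (phi0 u z w) * (phi0_swap23 v x y)
theorem alpha_swap2 (u v x y z w : Fin 7 → ℝ) : alphaf u v x z y w = -alphaf u v x y z w := by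
  simp only [alphaf]
  linear_combination (phi0 u x w) * (phi0_swap23 v y z) + (phi0 v x w) * (phi0_swap23 u y z)
theorem alpha_swap3 (u v x y z w : Fin 7 → ℝ) : alphaf u v x y w z = -alphaf u v x y z w := by
  simp only [alphaf]
  linear_combination (phi0 u x y) * (phi0_swap23 v z w) + (phi0 v x y) * (phi0_swap23 u z w)

theorem alpha_add1 (u v y z w x' y' : Fin 7 → ℝ) : alphaf u v (x' + y') y z w = alphaf u v x' y z w + alphaf u v y' y z w := by
  simp only [alphaf, phi0_add2, phi0_add3]; ring

theorem alpha_smul1 (r : ℝ) (u v y z w x' : Fin 7 → ℝ) : alphaf u v (r • x') y z w = r * alphaf u v x' y z w := by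
  simp only [alphaf, phi0_smul2, phi0_smul3]; ring

theorem alpha_add2 (u v x z w x' y' : Fin 7 → ℝ) : alphaf u v x (x' + y') z w = alphaf u v x x' z w + alphaf u v x y' z w := by
  simp only [alphaf, phi0_add2, phi0_add3]; ring

theorem alpha_smul2 (r : ℝ) (u v x z w x' : Fin 7 → ℝ) : alphaf u v x (r • x') z w = r * alphaf u v x x' z w := by
  simp only [alphaf, phi0_smul2, phi0_smul3]; ring

theorem alpha_add3 (u v x y w x' y' : Fin 7 → ℝ) : alphaf u v x y (x' + y') w = alphaf u v x y x' w + alphaf u v x y y' w := by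
  simp only [alphaf, phi0_add2, phi0_add3]; ring

theorem alpha_smul3 (r : ℝ) (u v x y w x' : Fin 7 → ℝ) : alphaf u v x y (r • x') w = r * alphaf u v x y x' w := by
  simp only [alphaf, phi0_smul2, phi0_smul3]; ring

theorem alpha_add4 (u v x y z x' y' : Fin 7 → ℝ) : alphaf u v x y z (x' + y') = alphaf u v x y z x' + alphaf u v x y z y' := by
  simp only [alphaf, phi0_add2, phi0_add3]; ring

theorem alpha_smul4 (r : ℝ) (u v x y z x' : Fin 7 → ℝ) : alphaf u v x y z (r • x') = r * alphaf u v x y z x' := by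
  simp only [alphaf, phi0_smul2, phi0_smul3]; ring

def gammaf (u v a0 a1 a2 a3 a4 a5 a6 : Fin 7 → ℝ) : ℝ :=
  alphaf u v a0 a1 a2 a3 * phi0 a4 a5 a6 - alphaf u v a0 a1 a2 a4 * phi0 a3 a5 a6 + alphaf u v a0 a1 a2 a5 * phi0 a3 a4 a6 - alphaf u v a0 a1 a2 a6 * phi0 a3 a4 a5 + alphaf u v a0 a1 a3 a4 * phi0 a2 a5 a6 - alphaf u v a0 a1 a3 a5 * phi0 a2 a4 a6 + alphaf u v a0 a1 a3 a6 * phi0 a2 a4 a5 + alphaf u v a0 a1 a4 a5 * phi0 a2 a3 a6 - alphaf u v a0 a1 a4 a6 * phi0 a2 a3 a5 + alphaf u v a0 a1 a5 a6 * phi0 a2 a3 a4 - alphaf u v a0 a2 a3 a4 * phi0 a1 a5 a6 + alphaf u v a0 a2 a3 a5 * phi0 a1 a4 a6 - alphaf u v a0 a2 a3 a6 * phi0 a1 a4 a5 - alphaf u v a0 a2 a4 a5 * phi0 a1 a3 a6 + alphaf u v a0 a2 a4 a6 * phi0 a1 a3 a5 - alphaf u v a0 a2 a5 a6 * phi0 a1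 a3 a4 + alphaf u v a0 a3 a4 a5 * phi0 a1 a2 a6 - alphaf u v a0 a3 a4 a6 * phi0 a1 a2 a5 + alphaf u v a0 a3 a5 a6 * phi0 a1 a2 a4 - alphaf u v a0 a4 a5 a6 * phi0 a1 a2 a3 + alphaf u v a1 a2 a3 a4 * phi0 a0 a5 a6 - alphaf u v a1 a2 a3 a5 * phi0 a0 a4 a6 + alphaf u v a1 a2 a3 a6 * phi0 a0 a4 a5 + alphaf u v a1 a2 a4 a5 * phi0 a0 a3 a6 - alphaf u v a1 a2 a4 a6 * phi0 a0 a3 a5 + alphaf u v a1 a2 a5 a6 * phi0 a0 a3 a4 - alphaf u v a1 a3 a4 a5 * phi0 a0 a2 a6 + alphaf u v a1 a3 a4 a6 * phi0 a0 a2 a5 - alphaf u v a1 a3 a5 a6 * phi0 a0 a2 a4 + alphaf u v a1 a4 a5 a6 * phi0 a0 a2 a3 + alphaf u v a2 a3 a4 a5 * phi0 a0 a1 a6 - alphaf u v a2 a3 a4 a6 * phi0 a0 a1 a5 + alphaf u v a2 a3 a5 a6 * phi0 a0 a1 a4 - alphaf u v a2 a4 a5 a6 * phi0 a0 a1 a3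 + alphaf u v a3 a4 a5 a6 * phi0 a0 a1 a2

theorem gamma_adj0 (u v a0 a1 a2 a3 a4 a5 a6 : Fin 7 → ℝ) :
    gammaf u v a1 a0 a2 a3 a4 a5 a6 = -gammaf u v a0 a1 a2 a3 a4 a5 a6 := by
  simp only [gammaf]
  linear_combination (phi0 a4 a5 a6) * (alpha_swap1 u v a0 a1 a2 a3) - (phi0 a3 a5 a6) * (alpha_swap1 u v a0 a1 a2 a4) + (phi0 a3 a4 a6) * (alpha_swap1 u v a0 a1 a2 a5) - (phi0 a3 a4 a5) * (alpha_swap1 u v a0 a1 a2 a6) + (phi0 a2 a5 a6) * (alpha_swap1 u v a0 a1 a3 a4) - (phi0 a2 a4 a6) * (alpha_swap1 u v a0 a1 a3 a5) + (phi0 a2 a4 a5) * (alpha_swap1 u v a0 a1 a3 a6) + (phi0 a2 a3 a6) * (alpha_swap1 u v a0 a1 a4 a5) - (phi0 a2 a3 a5) * (alpha_swap1 u v a0 a1 a4 a6) + (phi0 a2 a3 a4) * (alpha_swap1 u v a0 a1 a5 a6) + (alphaf u v a2 a3 a4 a5) * (phi0_swap12 a0 a1 a6) - (alphaf u v a2 a3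 a4 a6) * (phi0_swap12 a0 a1 a5) + (alphaf u v a2 a3 a5 a6) * (phi0_swap12 a0 a1 a4) - (alphaf u v a2 a4 a5 a6) * (phi0_swap12 a0 a1 a3) + (alphaf u v a3 a4 a5 a6) * (phi0_swap12 a0 a1 a2)

theorem gamma_adj1 (u v a0 a1 a2 a3 a4 a5 a6 : Fin 7 → ℝ) :
    gammaf u v a0 a2 a1 a3 a4 a5 a6 = -gammaf u v a0 a1 a2 a3 a4 a5 a6 := by
  simp only [gammaf]
  linear_combination (phi0 a4 a5 a6) * (alpha_swap2 u v a0 a1 a2 a3) - (phi0 a3 a5 a6) * (alpha_swap2 u v a0 a1 a2 a4) + (phi0 a3 a4 a6) * (alpha_swap2 u v a0 a1 a2 a5) - (phi0 a3 a4 a5) * (alpha_swap2 u v a0 a1 a2 a6) + (alphaf u v a0 a3 a4 a5) * (phi0_swap12 a1 a2 a6) - (alphaf u v a0 a3 a4 a6) * (phi0_swap12 a1 a2 a5) + (alphaf u v a0 a3 a5 a6) * (phi0_swap12 a1 a2 a4) - (alphaf u v a0 a4 a5 a6) * (phi0_swap12 a1 a2 a3) + (phi0 a0 a5 a6) * (alpha_swap1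 u v a1 a2 a3 a4) - (phi0 a0 a4 a6) * (alpha_swap1 u v a1 a2 a3 a5) + (phi0 a0 a4 a5) * (alpha_swap1 u v a1 a2 a3 a6) + (phi0 a0 a3 a6) * (alpha_swap1 u v a1 a2 a4 a5) - (phi0 a0 a3 a5) * (alpha_swap1 u v a1 a2 a4 a6) + (phi0 a0 a3 a4) * (alpha_swap1 u v a1 a2 a5 a6) + (alphaf u v a3 a4 a5 a6) * (phi0_swap23 a0 a1 a2)

theorem gamma_adj2 (u v a0 a1 a2 a3 a4 a5 a6 : Fin 7 → ℝ) :
    gammaf u v a0 a1 a3 a2 a4 a5 a6 = -gammaf u v a0 a1 a2 a3 a4 a5 a6 := by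
  simp only [gammaf]
  linear_combination (phi0 a4 a5 a6) * (alpha_swap3 u v a0 a1 a2 a3) + (alphaf u v a0 a1 a4 a5) * (phi0_swap12 a2 a3 a6) - (alphaf u v a0 a1 a4 a6) * (phi0_swap12 a2 a3 a5) + (alphaf u v a0 a1 a5 a6) * (phi0_swap12 a2 a3 a4) - (phi0 a1 a5 a6) * (alpha_swap2 u v a0 a2 a3 a4) + (phi0 a1 a4 a6) * (alpha_swap2 u v a0 a2 a3 a5) - (phi0 a1 a4 a5) * (alpha_swap2 u v a0 a2 a3 a6) - (alphaf u v a0 a4 a5 a6) * (phi0_swap23 a1 a2 a3) + (phi0 a0 a5 a6) * (alpha_swap2 u v a1 a2 a3 a4) - (phi0 a0 a4 a6) * (alpha_swap2 u v a1 a2 a3 a5) + (phi0 a0 a4 a5) * (alpha_swap2 u v a1 a2 a3 a6) + (alphaf u v a1 a4 a5 a6) * (phi0_swap23 a0 a2 a3) + (phi0 a0 a1 a6) * (alpha_swap1 u v a2 a3 a4 a5) - (phi0 a0 a1 a5) * (alpha_swap1 u v a2 a3 a4 a6) + (phi0 a0 a1 a4) * (alpha_swap1 u v a2 a3 a5 a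6)

theorem gamma_adj3 (u v a0 a1 a2 a3 a4 a5 a6 : Fin 7 → ℝ) :
    gammaf u v a0 a1 a2 a4 a3 a5 a6 = -gammaf u v a0 a1 a2 a3 a4 a5 a6 := by
  simp only [gammaf]
  linear_combination (alphaf u v a0 a1 a2 a5) * (phi0_swap12 a3 a4 a6) - (alphaf u v a0 a1 a2 a6) * (phi0_swap12 a3 a4 a5) + (phi0 a2 a5 a6) * (alpha_swap3 u v a0 a1 a3 a4) + (alphaf u v a0 a1 a5 a6) * (phi0_swap23 a2 a3 a4) - (phi0 a1 a5 a6) * (alpha_swap3 u v a0 a2 a3 a4) - (alphaf u v a0 a2 a5 a6) * (phi0_swap23 a1 a3 a4) + (phi0 a1 a2 a6) * (alpha_swap2 u v a0 a3 a4 a5) - (phi0 a1 a2 a5) * (alpha_swap2 u v a0 a3 a4 a6) + (phi0 a0 a5 a6) * (alpha_swap3 u v a1 a2 a3 a4) + (alphaf u v a1 a2 a5 a6) * (phi0_swap23 a0 a3 a4) - (phi0 a0 a2 a6) * (alpha_swap2 u v a1 a3 a4 a5) + (phi0 a0 a2 a5) * (alpha_swap2 u v a1 a3 a4 a6) + (phi0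 a0 a1 a6) * (alpha_swap2 u v a2 a3 a4 a5) - (phi0 a0 a1 a5) * (alpha_swap2 u v a2 a3 a4 a6) + (phi0 a0 a1 a2) * (alpha_swap1 u v a3 a4 a5 a6)

theorem gamma_adj4 (u v a0 a1 a2 a3 a4 a5 a6 : Fin 7 → ℝ) :
    gammaf u v a0 a1 a2 a3 a5 a4 a6 = -gammaf u v a0 a1 a2 a3 a4 a5 a6 := by
  simp only [gammaf]
  linear_combination (alphaf u v a0 a1 a2 a3) * (phi0_swap12 a4 a5 a6) - (alphaf u v a0 a1 a2 a6) * (phi0_swap23 a3 a4 a5) + (alphaf u v a0 a1 a3 a6) * (phi0_swap23 a2 a4 a5) + (phi0 a2 a3 a6) * (alpha_swap3 u v a0 a1 a4 a5) - (alphaf u v a0 a2 a3 a6) * (phi0_swap23 a1 a4 a5) - (phi0 a1 a3 a6) * (alpha_swap3 u v a0 a2 a4 a5) + (phi0 a1 a2 a6) * (alpha_swap3 u v a0 a3 a4 a5) - (phi0 a1 a2 a3) * (alpha_swap2 u v a0 a4 a5 a6) + (alphaf u v a1 a2 a3 a6) * (phi0_swap23 a0 a4 a5) + (phi0 a0 a3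 a6) * (alpha_swap3 u v a1 a2 a4 a5) - (phi0 a0 a2 a6) * (alpha_swap3 u v a1 a3 a4 a5) + (phi0 a0 a2 a3) * (alpha_swap2 u v a1 a4 a5 a6) + (phi0 a0 a1 a6) * (alpha_swap3 u v a2 a3 a4 a5) - (phi0 a0 a1 a3) * (alpha_swap2 u v a2 a4 a5 a6) + (phi0 a0 a1 a2) * (alpha_swap2 u v a3 a4 a5 a6)

theorem gamma_adj5 (u v a0 a1 a2 a3 a4 a5 a6 : Fin 7 → ℝ) :
    gammaf u v a0 a1 a2 a3 a4 a6 a5 = -gammaf u v a0 a1 a2 a3 a4 a5 a6 := by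
  simp only [gammaf]
  linear_combination (alphaf u v a0 a1 a2 a3) * (phi0_swap23 a4 a5 a6) - (alphaf u v a0 a1 a2 a4) * (phi0_swap23 a3 a5 a6) + (alphaf u v a0 a1 a3 a4) * (phi0_swap23 a2 a5 a6) + (phi0 a2 a3 a4) * (alpha_swap3 u v a0 a1 a5 a6) - (alphaf u v a0 a2 a3 a4) * (phi0_swap23 a1 a5 a6) - (phi0 a1 a3 a4) * (alpha_swap3 u v a0 a2 a5 a6) + (phi0 a1 a2 a4) * (alpha_swap3 u v a0 a3 a5 a6) - (phi0 a1 a2 a3) * (alpha_swap3 u v a0 a4 a5 a6) + (alphaf u v a1 a2 a3 a4) * (phi0_swap23 a0 a5 a6) + (phi0 a0 a3 a4) * (alpha_swap3 u v a1 a2 a5 a6) - (phi0 a0 a2 a4) * (alpha_swap3 u v a1 a3 a5 a6) + (phi0 a0 a2 a3) * (alpha_swap3 u v a1 a4 a5 a6) + (phi0 a0 a1 a4) * (alpha_swap3 u v a2 a3 a5 a6) - (phi0 a0 a1 a3) * (alpha_swap3 u v a2 a4 a5 a6) + (phi0 a0 a1 a2) * (alpha_swap3 u v a3 a4 a5 a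6)

theorem gamma_zero_0_1 (u v a0 a1 a2 a3 a4 a5 a6 : Fin 7 → ℝ) (h : a0 = a1) : gammaf u v a0 a1 a2 a3 a4 a5 a6 = 0 := by
  have hs := gamma_adj0 u v a0 a1 a2 a3 a4 a5 a6
  rw [h] at hs ⊢
  linarith

theorem gamma_swap_0_2 (u v a0 a1 a2 a3 a4 a5 a6 : Fin 7 → ℝ) :
    gammaf u v a2 a1 a0 a3 a4 a5 a6 = -gammaf u v a0 a1 a2 a3 a4 a5 a6 := by
  rw [gamma_adj0, gamma_adj1, gamma_adj0]; ring

theorem gamma_zero_0_2 (u v a0 a1 a2 a3 a4 a5 a6 : Fin 7 → ℝ) (h : a0 = a2) : gammaf u v a0 a1 a2 a3 a4 a5 a6 = 0 := by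
  have hs := gamma_swap_0_2 u v a0 a1 a2 a3 a4 a5 a6
  rw [h] at hs ⊢
  linarith

theorem gamma_swap_0_3 (u v a0 a1 a2 a3 a4 a5 a6 : Fin 7 → ℝ) :
    gammaf u v a3 a1 a2 a0 a4 a5 a6 = -gammaf u v a0 a1 a2 a3 a4 a5 a6 := by
  rw [gamma_adj0, gamma_adj1, gamma_adj2, gamma_adj1, gamma_adj0]; ring

theorem gamma_zero_0_3 (u v a0 a1 a2 a3 a4 a5 a6 : Fin 7 → ℝ) (h : a0 = a3) : gammaf u v a0 a1 a2 a3 a4 a5 a6 = 0 := by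
  have hs := gamma_swap_0_3 u v a0 a1 a2 a3 a4 a5 a6
  rw [h] at hs ⊢
  linarith

theorem gamma_swap_0_4 (u v a0 a1 a2 a3 a4 a5 a6 : Fin 7 → ℝ) :
    gammaf u v a4 a1 a2 a3 a0 a5 a6 = -gammaf u v a0 a1 a2 a3 a4 a5 a6 := by
  rw [gamma_adj0, gamma_adj1, gamma_adj2, gamma_adj3, gamma_adj2, gamma_adj1, gamma_adj0]; ring

theorem gamma_zero_0_4 (u v a0 a1 a2 a3 a4 a5 a6 : Fin 7 → ℝ) (h : a0 = a4) : gammaf u v a0 a1 a2 a3 a4 a5 a6 = 0 := by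
  have hs := gamma_swap_0_4 u v a0 a1 a2 a3 a4 a5 a6
  rw [h] at hs ⊢
  linarith

theorem gamma_swap_0_5 (u v a0 a1 a2 a3 a4 a5 a6 : Fin 7 → ℝ) :
    gammaf u v a5 a1 a2 a3 a4 a0 a6 = -gammaf u v a0 a1 a2 a3 a4 a5 a6 := by
  rw [gamma_adj0, gamma_adj1, gamma_adj2, gamma_adj3, gamma_adj4, gamma_adj3, gamma_adj2, gamma_adj1, gamma_adj0]; ring

theorem gamma_zero_0_5 (u v a0 a1 a2 a3 a4 a5 a6 : Fin 7 → ℝ) (h : a0 = a5) : gammaf u v a0 a1 a2 a3 a4 a5 a6 = 0 := by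
  have hs := gamma_swap_0_5 u v a0 a1 a2 a3 a4 a5 a6
  rw [h] at hs ⊢
  linarith

theorem gamma_swap_0_6 (u v a0 a1 a2 a3 a4 a5 a6 : Fin 7 → ℝ) :
    gammaf u v a6 a1 a2 a3 a4 a5 a0 = -gammaf u v a0 a1 a2 a3 a4 a5 a6 := by
  rw [gamma_adj0, gamma_adj1, gamma_adj2, gamma_adj3, gamma_adj4, gamma_adj5, gamma_adj4, gamma_adj3, gamma_adj2, gamma_adj1, gamma_adj0]; ring

theorem gamma_zero_0_6 (u v a0 a1 a2 a3 a4 a5 a6 : Fin 7 → ℝ) (h : a0 = a6) : gammaf u v a0 a1 a2 a3 a4 a5 a6 = 0 := by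
  have hs := gamma_swap_0_6 u v a0 a1 a2 a3 a4 a5 a6
  rw [h] at hs ⊢
  linarith

theorem gamma_zero_1_2 (u v a0 a1 a2 a3 a4 a5 a6 : Fin 7 → ℝ) (h : a1 = a2) : gammaf u v a0 a1 a2 a3 a4 a5 a6 = 0 := by
  have hs := gamma_adj1 u v a0 a1 a2 a3 a4 a5 a6
  rw [h] at hs ⊢
  linarith

theorem gamma_swap_1_3 (u v a0 a1 a2 a3 a4 a5 a6 : Fin 7 → ℝ) :
    gammaf u v a0 a3 a2 a1 a4 a5 a6 = -gammaf u v a0 a1 a2 a3 a4 a5 a6 := by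
  rw [gamma_adj1, gamma_adj2, gamma_adj1]; ring

theorem gamma_zero_1_3 (u v a0 a1 a2 a3 a4 a5 a6 : Fin 7 → ℝ) (h : a1 = a3) : gammaf u v a0 a1 a2 a3 a4 a5 a6 = 0 := by
  have hs := gamma_swap_1_3 u v a0 a1 a2 a3 a4 a5 a6
  rw [h] at hs ⊢
  linarith

theorem gamma_swap_1_4 (u v a0 a1 a2 a3 a4 a5 a6 : Fin 7 → ℝ) :
    gammaf u v a0 a4 a2 a3 a1 a5 a6 = -gammaf u v a0 a1 a2 a3 a4 a5 a6 := by
  rw [gamma_adj1, gamma_adj2, gamma_adj3, gamma_adj2, gamma_adj1]; ring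

theorem gamma_zero_1_4 (u v a0 a1 a2 a3 a4 a5 a6 : Fin 7 → ℝ) (h : a1 = a4) : gammaf u v a0 a1 a2 a3 a4 a5 a6 = 0 := by
  have hs := gamma_swap_1_4 u v a0 a1 a2 a3 a4 a5 a6
  rw [h] at hs ⊢
  linarith

theorem gamma_swap_1_5 (u v a0 a1 a2 a3 a4 a5 a6 : Fin 7 → ℝ) :
    gammaf u v a0 a5 a2 a3 a4 a1 a6 = -gammaf u v a0 a1 a2 a3 a4 a5 a6 := by
  rw [gamma_adj1, gamma_adj2, gamma_adj3, gamma_adj4, gamma_adj3, gamma_adj2, gamma_adj1]; ring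

theorem gamma_zero_1_5 (u v a0 a1 a2 a3 a4 a5 a6 : Fin 7 → ℝ) (h : a1 = a5) : gammaf u v a0 a1 a2 a3 a4 a5 a6 = 0 := by
  have hs := gamma_swap_1_5 u v a0 a1 a2 a3 a4 a5 a6
  rw [h] at hs ⊢
  linarith

theorem gamma_swap_1_6 (u v a0 a1 a2 a3 a4 a5 a6 : Fin 7 → ℝ) :
    gammaf u v a0 a6 a2 a3 a4 a5 a1 = -gammaf u v a0 a1 a2 a3 a4 a5 a6 := by
  rw [gamma_adj1, gamma_adj2, gamma_adj3, gamma_adj4, gamma_adj5, gamma_adj4, gamma_adj3, gamma_adj2, gamma_adj1]; ring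

theorem gamma_zero_1_6 (u v a0 a1 a2 a3 a4 a5 a6 : Fin 7 → ℝ) (h : a1 = a6) : gammaf u v a0 a1 a2 a3 a4 a5 a6 = 0 := by
  have hs := gamma_swap_1_6 u v a0 a1 a2 a3 a4 a5 a6
  rw [h] at hs ⊢
  linarith

theorem gamma_zero_2_3 (u v a0 a1 a2 a3 a4 a5 a6 : Fin 7 → ℝ) (h : a2 = a3) : gammaf u v a0 a1 a2 a3 a4 a5 a6 = 0 := by
  have hs := gamma_adj2 u v a0 a1 a2 a3 a4 a5 a6
  rw [h] at hs ⊢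
  linarith

theorem gamma_swap_2_4 (u v a0 a1 a2 a3 a4 a5 a6 : Fin 7 → ℝ) :
    gammaf u v a0 a1 a4 a3 a2 a5 a6 = -gammaf u v a0 a1 a2 a3 a4 a5 a6 := by
  rw [gamma_adj2, gamma_adj3, gamma_adj2]; ring

theorem gamma_zero_2_4 (u v a0 a1 a2 a3 a4 a5 a6 : Fin 7 → ℝ) (h : a2 = a4) : gammaf u v a0 a1 a2 a3 a4 a5 a6 = 0 := by
  have hs := gamma_swap_2_4 u v a0 a1 a2 a3 a4 a5 a6
  rw [h] at hs ⊢
  linarith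

theorem gamma_swap_2_5 (u v a0 a1 a2 a3 a4 a5 a6 : Fin 7 → ℝ) :
    gammaf u v a0 a1 a5 a3 a4 a2 a6 = -gammaf u v a0 a1 a2 a3 a4 a5 a6 := by
  rw [gamma_adj2, gamma_adj3, gamma_adj4, gamma_adj3, gamma_adj2]; ring

theorem gamma_zero_2_5 (u v a0 a1 a2 a3 a4 a5 a6 : Fin 7 → ℝ) (h : a2 = a5) : gammaf u v a0 a1 a2 a3 a4 a5 a6 = 0 := by
  have hs := gamma_swap_2_5 u v a0 a1 a2 a3 a4 a5 a6
  rw [h] at hs ⊢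
  linarith

theorem gamma_swap_2_6 (u v a0 a1 a2 a3 a4 a5 a6 : Fin 7 → ℝ) :
    gammaf u v a0 a1 a6 a3 a4 a5 a2 = -gammaf u v a0 a1 a2 a3 a4 a5 a6 := by
  rw [gamma_adj2, gamma_adj3, gamma_adj4, gamma_adj5, gamma_adj4, gamma_adj3, gamma_adj2]; ring

theorem gamma_zero_2_6 (u v a0 a1 a2 a3 a4 a5 a6 : Fin 7 → ℝ) (h : a2 = a6) : gammaf u v a0 a1 a2 a3 a4 a5 a6 = 0 := by
  have hs := gamma_swap_2_6 u v a0 a1 a2 a3 a4 a5 a6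
  rw [h] at hs ⊢
  linarith

theorem gamma_zero_3_4 (u v a0 a1 a2 a3 a4 a5 a6 : Fin 7 → ℝ) (h : a3 = a4) : gammaf u v a0 a1 a2 a3 a4 a5 a6 = 0 := by
  have hs := gamma_adj3 u v a0 a1 a2 a3 a4 a5 a6
  rw [h] at hs ⊢
  linarith

theorem gamma_swap_3_5 (u v a0 a1 a2 a3 a4 a5 a6 : Fin 7 → ℝ) :
    gammaf u v a0 a1 a2 a5 a4 a3 a6 = -gammaf u v a0 a1 a2 a3 a4 a5 a6 := by
  rw [gamma_adj3, gamma_adj4, gamma_adj3]; ring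

theorem gamma_zero_3_5 (u v a0 a1 a2 a3 a4 a5 a6 : Fin 7 → ℝ) (h : a3 = a5) : gammaf u v a0 a1 a2 a3 a4 a5 a6 = 0 := by
  have hs := gamma_swap_3_5 u v a0 a1 a2 a3 a4 a5 a6
  rw [h] at hs ⊢
  linarith

theorem gamma_swap_3_6 (u v a0 a1 a2 a3 a4 a5 a6 : Fin 7 → ℝ) :
    gammaf u v a0 a1 a2 a6 a4 a5 a3 = -gammaf u v a0 a1 a2 a3 a4 a5 a6 := by
  rw [gamma_adj3, gamma_adj4, gamma_adj5, gamma_adj4, gamma_adj3]; ring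

theorem gamma_zero_3_6 (u v a0 a1 a2 a3 a4 a5 a6 : Fin 7 → ℝ) (h : a3 = a6) : gammaf u v a0 a1 a2 a3 a4 a5 a6 = 0 := by
  have hs := gamma_swap_3_6 u v a0 a1 a2 a3 a4 a5 a6
  rw [h] at hs ⊢
  linarith

theorem gamma_zero_4_5 (u v a0 a1 a2 a3 a4 a5 a6 : Fin 7 → ℝ) (h : a4 = a5) : gammaf u v a0 a1 a2 a3 a4 a5 a6 = 0 := by
  have hs := gamma_adj4 u v a0 a1 a2 a3 a4 a5 a6
  rw [h] at hs ⊢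
  linarith

theorem gamma_swap_4_6 (u v a0 a1 a2 a3 a4 a5 a6 : Fin 7 → ℝ) :
    gammaf u v a0 a1 a2 a3 a6 a5 a4 = -gammaf u v a0 a1 a2 a3 a4 a5 a6 := by
  rw [gamma_adj4, gamma_adj5, gamma_adj4]; ring

theorem gamma_zero_4_6 (u v a0 a1 a2 a3 a4 a5 a6 : Fin 7 → ℝ) (h : a4 = a6) : gammaf u v a0 a1 a2 a3 a4 a5 a6 = 0 := by
  have hs := gamma_swap_4_6 u v a0 a1 a2 a3 a4 a5 a6
  rw [h] at hs ⊢
  linarith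

theorem gamma_zero_5_6 (u v a0 a1 a2 a3 a4 a5 a6 : Fin 7 → ℝ) (h : a5 = a6) : gammaf u v a0 a1 a2 a3 a4 a5 a6 = 0 := by
  have hs := gamma_adj5 u v a0 a1 a2 a3 a4 a5 a6
  rw [h] at hs ⊢
  linarith

theorem gamma_add0 (u v a1 a2 a3 a4 a5 a6 x y : Fin 7 → ℝ) :
    gammaf u v (x + y) a1 a2 a3 a4 a5 a6 = gammaf u v x a1 a2 a3 a4 a5 a6 + gammaf u v y a1 a2 a3 a4 a5 a6 := by
  simp only [gammaf, alpha_add1, alpha_add2, alpha_add3, alpha_add4, phi0_add1, phi0_add2, phi0_add3]; ring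

theorem gamma_smul0 (r : ℝ) (u v a1 a2 a3 a4 a5 a6 x : Fin 7 → ℝ) :
    gammaf u v (r • x) a1 a2 a3 a4 a5 a6 = r * gammaf u v x a1 a2 a3 a4 a5 a6 := by
  simp only [gammaf, alpha_smul1, alpha_smul2, alpha_smul3, alpha_smul4, phi0_smul1, phi0_smul2, phi0_smul3]; ring

theorem gamma_add1 (u v a0 a2 a3 a4 a5 a6 x y : Fin 7 → ℝ) :
    gammaf u v a0 (x + y) a2 a3 a4 a5 a6 = gammaf u v a0 x a2 a3 a4 a5 a6 + gammaf u v a0 y a2 a3 a4 a5 a6 := by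
  simp only [gammaf, alpha_add1, alpha_add2, alpha_add3, alpha_add4, phi0_add1, phi0_add2, phi0_add3]; ring

theorem gamma_smul1 (r : ℝ) (u v a0 a2 a3 a4 a5 a6 x : Fin 7 → ℝ) :
    gammaf u v a0 (r • x) a2 a3 a4 a5 a6 = r * gammaf u v a0 x a2 a3 a4 a5 a6 := by
  simp only [gammaf, alpha_smul1, alpha_smul2, alpha_smul3, alpha_smul4, phi0_smul1, phi0_smul2, phi0_smul3]; ring

theorem gamma_add2 (u v a0 a1 a3 a4 a5 a6 x y : Fin 7 → ℝ) :
    gammaf u v a0 a1 (x + y) a3 a4 a5 a6 = gammaf u v a0 a1 x a3 a4 a5 a6 + gammaf u v a0 a1 y a3 a4 a5 a6 := by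
  simp only [gammaf, alpha_add1, alpha_add2, alpha_add3, alpha_add4, phi0_add1, phi0_add2, phi0_add3]; ring

theorem gamma_smul2 (r : ℝ) (u v a0 a1 a3 a4 a5 a6 x : Fin 7 → ℝ) :
    gammaf u v a0 a1 (r • x) a3 a4 a5 a6 = r * gammaf u v a0 a1 x a3 a4 a5 a6 := by
  simp only [gammaf, alpha_smul1, alpha_smul2, alpha_smul3, alpha_smul4, phi0_smul1, phi0_smul2, phi0_smul3]; ring

theorem gamma_add3 (u v a0 a1 a2 a4 a5 a6 x y : Fin 7 → ℝ) :
    gammaf u v a0 a1 a2 (x + y) a4 a5 a6 = gammaf u v a0 a1 a2 x a4 a5 a6 + gammaf u v a0 a1 a2 y a4 a5 a6 := by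
  simp only [gammaf, alpha_add1, alpha_add2, alpha_add3, alpha_add4, phi0_add1, phi0_add2, phi0_add3]; ring

theorem gamma_smul3 (r : ℝ) (u v a0 a1 a2 a4 a5 a6 x : Fin 7 → ℝ) :
    gammaf u v a0 a1 a2 (r • x) a4 a5 a6 = r * gammaf u v a0 a1 a2 x a4 a5 a6 := by
  simp only [gammaf, alpha_smul1, alpha_smul2, alpha_smul3, alpha_smul4, phi0_smul1, phi0_smul2, phi0_smul3]; ring

theorem gamma_add4 (u v a0 a1 a2 a3 a5 a6 x y : Fin 7 → ℝ) :
    gammaf u v a0 a1 a2 a3 (x + y) a5 a6 = gammaf u v a0 a1 a2 a3 x a5 a6 + gammaf u v a0 a1 a2 a3 y a5 a6 := by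
  simp only [gammaf, alpha_add1, alpha_add2, alpha_add3, alpha_add4, phi0_add1, phi0_add2, phi0_add3]; ring

theorem gamma_smul4 (r : ℝ) (u v a0 a1 a2 a3 a5 a6 x : Fin 7 → ℝ) :
    gammaf u v a0 a1 a2 a3 (r • x) a5 a6 = r * gammaf u v a0 a1 a2 a3 x a5 a6 := by
  simp only [gammaf, alpha_smul1, alpha_smul2, alpha_smul3, alpha_smul4, phi0_smul1, phi0_smul2, phi0_smul3]; ring

theorem gamma_add5 (u v a0 a1 a2 a3 a4 a6 x y : Fin 7 → ℝ) :
    gammaf u v a0 a1 a2 a3 a4 (x + y) a6 = gammaf u v a0 a1 a2 a3 a4 x a6 + gammaf u v a0 a1 a2 a3 a4 y a6 := by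
  simp only [gammaf, alpha_add1, alpha_add2, alpha_add3, alpha_add4, phi0_add1, phi0_add2, phi0_add3]; ring

theorem gamma_smul5 (r : ℝ) (u v a0 a1 a2 a3 a4 a6 x : Fin 7 → ℝ) :
    gammaf u v a0 a1 a2 a3 a4 (r • x) a6 = r * gammaf u v a0 a1 a2 a3 a4 x a6 := by
  simp only [gammaf, alpha_smul1, alpha_smul2, alpha_smul3, alpha_smul4, phi0_smul1, phi0_smul2, phi0_smul3]; ring

theorem gamma_add6 (u v a0 a1 a2 a3 a4 a5 x y : Fin 7 → ℝ) :
    gammaf u v a0 a1 a2 a3 a4 a5 (x + y) = gammaf u v a0 a1 a2 a3 a4 a5 x + gammaf u v a0 a1 a2 a3 a4 a5 y := by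
  simp only [gammaf, alpha_add1, alpha_add2, alpha_add3, alpha_add4, phi0_add1, phi0_add2, phi0_add3]; ring

theorem gamma_smul6 (r : ℝ) (u v a0 a1 a2 a3 a4 a5 x : Fin 7 → ℝ) :
    gammaf u v a0 a1 a2 a3 a4 a5 (r • x) = r * gammaf u v a0 a1 a2 a3 a4 a5 x := by
  simp only [gammaf, alpha_smul1, alpha_smul2, alpha_smul3, alpha_smul4, phi0_smul1, phi0_smul2, phi0_smul3]; ring

set_option maxHeartbeats 800000 in
def gammaML (u v : Fin 7 → ℝ) : MultilinearMap ℝ (fun _ : Fin 7 => (Fin 7 → ℝ)) ℝ where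
  toFun c := gammaf u v (c 0) (c 1) (c 2) (c 3) (c 4) (c 5) (c 6)
  map_update_add' := by
    intro dec c i x y
    have hdec : dec = instDecidableEqFin 7 := Subsingleton.elim _ _
    subst hdec
    fin_cases i
    · simp only [Function.update]
      simp
      exact gamma_add0 u v (c 1) (c 2) (c 3) (c 4) (c 5) (c 6) x y
    · simp only [Function.update]
      simp
      exact gamma_add1 u v (c 0) (c 2) (c 3) (c 4) (c 5) (c 6) x y
    · simp only [Function.update]
      simp
      exact gamma_add2 u v (c 0) (c 1) (c 3) (c 4) (c 5) (c 6) x y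
    · simp only [Function.update]
      simp
      exact gamma_add3 u v (c 0) (c 1) (c 2) (c 4) (c 5) (c 6) x y
    · simp only [Function.update]
      simp
      exact gamma_add4 u v (c 0) (c 1) (c 2) (c 3) (c 5) (c 6) x y
    · simp only [Function.update]
      simp
      exact gamma_add5 u v (c 0) (c 1) (c 2) (c 3) (c 4) (c 6) x y
    · simp only [Function.update]
      simp
      exact gamma_add6 u v (c 0) (c 1) (c 2) (c 3) (c 4) (c 5) x y
  map_update_smul' := by
    intro dec c i r x
    have hdec : dec = instDecidableEqFin 7 := Subsingleton.elim _ _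
    subst hdec
    fin_cases i
    · simp only [Function.update]
      simp
      rw [gamma_smul0 r u v (c 1) (c 2) (c 3) (c 4) (c 5) (c 6) x]
    · simp only [Function.update]
      simp
      rw [gamma_smul1 r u v (c 0) (c 2) (c 3) (c 4) (c 5) (c 6) x]
    · simp only [Function.update]
      simp
      rw [gamma_smul2 r u v (c 0) (c 1) (c 3) (c 4) (c 5) (c 6) x]
    · simp only [Function.update]
      simp
      rw [gamma_smul3 r u v (c 0) (c 1) (c 2) (c 4) (c 5) (c 6) x]
    · simp only [Function.update]
      simp
      rw [gamma_smul4 r u v (c 0) (c 1) (c 2) (c 3) (c 5) (c 6) x]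
    · simp only [Function.update]
      simp
      rw [gamma_smul5 r u v (c 0) (c 1) (c 2) (c 3) (c 4) (c 6) x]
    · simp only [Function.update]
      simp
      rw [gamma_smul6 r u v (c 0) (c 1) (c 2) (c 3) (c 4) (c 5) x]

def gammaAlt (u v : Fin 7 → ℝ) : (Fin 7 → ℝ) [⋀^Fin 7]→ₗ[ℝ] ℝ where
  toMultilinearMap := gammaML u v
  map_eq_zero_of_eq' := by
    intro c i j hc hij
    fin_cases i <;> fin_cases j
    · exact absurd rfl hij
    · exact gamma_zero_0_1 u v (c 0) (c 1) (c 2) (c 3) (c 4) (c 5) (c 6) hc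
    · exact gamma_zero_0_2 u v (c 0) (c 1) (c 2) (c 3) (c 4) (c 5) (c 6) hc
    · exact gamma_zero_0_3 u v (c 0) (c 1) (c 2) (c 3) (c 4) (c 5) (c 6) hc
    · exact gamma_zero_0_4 u v (c 0) (c 1) (c 2) (c 3) (c 4) (c 5) (c 6) hc
    · exact gamma_zero_0_5 u v (c 0) (c 1) (c 2) (c 3) (c 4) (c 5) (c 6) hc
    · exact gamma_zero_0_6 u v (c 0) (c 1) (c 2) (c 3) (c 4) (c 5) (c 6) hc
    · exact gamma_zero_0_1 u v (c 0) (c 1) (c 2) (c 3) (c 4) (c 5) (c 6) hc.symm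
    · exact absurd rfl hij
    · exact gamma_zero_1_2 u v (c 0) (c 1) (c 2) (c 3) (c 4) (c 5) (c 6) hc
    · exact gamma_zero_1_3 u v (c 0) (c 1) (c 2) (c 3) (c 4) (c 5) (c 6) hc
    · exact gamma_zero_1_4 u v (c 0) (c 1) (c 2) (c 3) (c 4) (c 5) (c 6) hc
    · exact gamma_zero_1_5 u v (c 0) (c 1) (c 2) (c 3) (c 4) (c 5) (c 6) hc
    · exact gamma_zero_1_6 u v (c 0) (c 1) (c 2) (c 3) (c 4) (c 5) (c 6) hc
    · exact gamma_zero_0_2 u v (c 0) (c 1) (c 2) (c 3) (c 4) (c 5) (c 6) hc.symm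
    · exact gamma_zero_1_2 u v (c 0) (c 1) (c 2) (c 3) (c 4) (c 5) (c 6) hc.symm
    · exact absurd rfl hij
    · exact gamma_zero_2_3 u v (c 0) (c 1) (c 2) (c 3) (c 4) (c 5) (c 6) hc
    · exact gamma_zero_2_4 u v (c 0) (c 1) (c 2) (c 3) (c 4) (c 5) (c 6) hc
    · exact gamma_zero_2_5 u v (c 0) (c 1) (c 2) (c 3) (c 4) (c 5) (c 6) hc
    · exact gamma_zero_2_6 u v (c 0) (c 1) (c 2) (c 3) (c 4) (c 5) (c 6) hc
    · exact gamma_zero_0_3 u v (c 0) (c 1) (c 2) (c 3) (c 4) (c 5) (c 6) hc.symm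
    · exact gamma_zero_1_3 u v (c 0) (c 1) (c 2) (c 3) (c 4) (c 5) (c 6) hc.symm
    · exact gamma_zero_2_3 u v (c 0) (c 1) (c 2) (c 3) (c 4) (c 5) (c 6) hc.symm
    · exact absurd rfl hij
    · exact gamma_zero_3_4 u v (c 0) (c 1) (c 2) (c 3) (c 4) (c 5) (c 6) hc
    · exact gamma_zero_3_5 u v (c 0) (c 1) (c 2) (c 3) (c 4) (c 5) (c 6) hc
    · exact gamma_zero_3_6 u v (c 0) (c 1) (c 2) (c 3) (c 4) (c 5) (c 6) hc
    · exact gamma_zero_0_4 u v (c 0) (c 1) (c 2) (c 3) (c 4) (c 5) (c 6) hc.symm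
    · exact gamma_zero_1_4 u v (c 0) (c 1) (c 2) (c 3) (c 4) (c 5) (c 6) hc.symm
    · exact gamma_zero_2_4 u v (c 0) (c 1) (c 2) (c 3) (c 4) (c 5) (c 6) hc.symm
    · exact gamma_zero_3_4 u v (c 0) (c 1) (c 2) (c 3) (c 4) (c 5) (c 6) hc.symm
    · exact absurd rfl hij
    · exact gamma_zero_4_5 u v (c 0) (c 1) (c 2) (c 3) (c 4) (c 5) (c 6) hc
    · exact gamma_zero_4_6 u v (c 0) (c 1) (c 2) (c 3) (c 4) (c 5) (c 6) hc
    · exact gamma_zero_0_5 u v (c 0) (c 1) (c 2) (c 3) (c 4) (c 5) (c 6) hc.symm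
    · exact gamma_zero_1_5 u v (c 0) (c 1) (c 2) (c 3) (c 4) (c 5) (c 6) hc.symm
    · exact gamma_zero_2_5 u v (c 0) (c 1) (c 2) (c 3) (c 4) (c 5) (c 6) hc.symm
    · exact gamma_zero_3_5 u v (c 0) (c 1) (c 2) (c 3) (c 4) (c 5) (c 6) hc.symm
    · exact gamma_zero_4_5 u v (c 0) (c 1) (c 2) (c 3) (c 4) (c 5) (c 6) hc.symm
    · exact absurd rfl hij
    · exact gamma_zero_5_6 u v (c 0) (c 1) (c 2) (c 3) (c 4) (c 5) (c 6) hc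
    · exact gamma_zero_0_6 u v (c 0) (c 1) (c 2) (c 3) (c 4) (c 5) (c 6) hc.symm
    · exact gamma_zero_1_6 u v (c 0) (c 1) (c 2) (c 3) (c 4) (c 5) (c 6) hc.symm
    · exact gamma_zero_2_6 u v (c 0) (c 1) (c 2) (c 3) (c 4) (c 5) (c 6) hc.symm
    · exact gamma_zero_3_6 u v (c 0) (c 1) (c 2) (c 3) (c 4) (c 5) (c 6) hc.symm
    · exact gamma_zero_4_6 u v (c 0) (c 1) (c 2) (c 3) (c 4) (c 5) (c 6) hc.symm
    · exact gamma_zero_5_6 u v (c 0) (c 1) (c 2) (c 3) (c 4) (c 5) (c 6) hc.symm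
    · exact absurd rfl hij

theorem gammaAlt_apply (u v : Fin 7 → ℝ) (c : Fin 7 → (Fin 7 → ℝ)) :
    gammaAlt u v c = gammaf u v (c 0) (c 1) (c 2) (c 3) (c 4) (c 5) (c 6) := rfl

set_option maxHeartbeats 1600000 in
theorem gamma_basis (u v : Fin 7 → ℝ) :
    gammaf u v (ee 0) (ee 1) (ee 2) (ee 3) (ee 4) (ee 5) (ee 6) = 6 * dotp u v := by
  simp [gammaf, alphaf, phi0_expand, ee, dotp]; ring

theorem dotp_cross (u v w : Fin 7 → ℝ) : dotp (crossp u v) w = phi0 u v w := by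
  rw [phi0_expand]; simp [dotp, crossp]; ring
theorem lagrange (u v : Fin 7 → ℝ) :
    dotp (crossp u v) (crossp u v) = dotp u u * dotp v v - (dotp u v) ^ 2 := by
  simp [dotp, crossp]; ring
set_option maxHeartbeats 800000 in
theorem psi_ident (u v w x : Fin 7 → ℝ) :
    psi0 u v w x = dotp (crossp u v) (crossp w x)
      - (dotp u w * dotp v x - dotp u x * dotp v w) := by
  rw [psi0_expand]; simp [dotp, crossp]; ring
theorem dotp_sub_left (x y z : Fin 7 → ℝ) : dotp (x - y) z = dotp x z - dotp y z := by
  simp only [dotp, Pi.sub_apply]; ring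
theorem dotp_smul_left (r : ℝ) (x y : Fin 7 → ℝ) : dotp (r • x) y = r * dotp x y := by
  simp only [dotp, Pi.smul_apply, smul_eq_mul]; ring
theorem dotp_self_nonneg (x : Fin 7 → ℝ) : 0 ≤ dotp x x := by
  simp only [dotp]
  linarith [mul_self_nonneg (x 0), mul_self_nonneg (x 1), mul_self_nonneg (x 2), mul_self_nonneg (x 3), mul_self_nonneg (x 4), mul_self_nonneg (x 5), mul_self_nonneg (x 6)]
theorem dotp_self_eq_zero {x : Fin 7 → ℝ} (h : dotp x x = 0) : x = 0 := by
  simp only [dotp] at h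
  have h0 : x 0 = 0 := mul_self_eq_zero.mp (le_antisymm (by linarith [mul_self_nonneg (x 1), mul_self_nonneg (x 2), mul_self_nonneg (x 3), mul_self_nonneg (x 4), mul_self_nonneg (x 5), mul_self_nonneg (x 6)]) (mul_self_nonneg (x 0)))
  have h1 : x 1 = 0 := mul_self_eq_zero.mp (le_antisymm (by linarith [mul_self_nonneg (x 0), mul_self_nonneg (x 2), mul_self_nonneg (x 3), mul_self_nonneg (x 4), mul_self_nonneg (x 5), mul_self_nonneg (x 6)]) (mul_self_nonneg (x 1)))
  have h2 : x 2 = 0 := mul_self_eq_zero.mp (le_antisymm (by linarith [mul_self_nonneg (x 0), mul_self_nonneg (x 1), mul_self_nonneg (x 3), mul_self_nonneg (x 4), mul_self_nonneg (x 5), mul_self_nonneg (x 6)]) (mul_self_nonneg (x 2)))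
  have h3 : x 3 = 0 := mul_self_eq_zero.mp (le_antisymm (by linarith [mul_self_nonneg (x 0), mul_self_nonneg (x 1), mul_self_nonneg (x 2), mul_self_nonneg (x 4), mul_self_nonneg (x 5), mul_self_nonneg (x 6)]) (mul_self_nonneg (x 3)))
  have h4 : x 4 = 0 := mul_self_eq_zero.mp (le_antisymm (by linarith [mul_self_nonneg (x 0), mul_self_nonneg (x 1), mul_self_nonneg (x 2), mul_self_nonneg (x 3), mul_self_nonneg (x 5), mul_self_nonneg (x 6)]) (mul_self_nonneg (x 4)))
  have h5 : x 5 = 0 := mul_self_eq_zero.mp (le_antisymm (by linarith [mul_self_nonneg (x 0), mul_self_nonneg (x 1), mul_self_nonneg (x 2), mul_self_nonneg (x 3), mul_self_nonneg (x 4), mul_self_nonneg (x 6)]) (mul_self_nonneg (x 5)))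
  have h6 : x 6 = 0 := mul_self_eq_zero.mp (le_antisymm (by linarith [mul_self_nonneg (x 0), mul_self_nonneg (x 1), mul_self_nonneg (x 2), mul_self_nonneg (x 3), mul_self_nonneg (x 4), mul_self_nonneg (x 5)]) (mul_self_nonneg (x 6)))
  funext k
  fin_cases k
  · exact h0
  · exact h1
  · exact h2
  · exact h3
  · exact h4
  · exact h5
  · exact h6
theorem dotp_ee00 : dotp (ee 0) (ee 0) = 1 := by simp [dotp, ee]
theorem dotp_ee11 : dotp (ee 1) (ee 1) = 1 := by simp [dotp, ee]
theorem dotp_ee22 : dotp (ee 2) (ee 2) = 1 := by simp [dotp, ee]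
theorem dotp_ee01 : dotp (ee 0) (ee 1) = 0 := by simp [dotp, ee]
theorem crossp_ee01 : crossp (ee 0) (ee 1) = ee 2 := by
  funext k
  fin_cases k <;> simp [crossp, ee]

end G2Aux

/-- Any linear map preserving `φ₀` also preserves its Hodge dual `ψ₀ = *φ₀`. -/
theorem stmt15 (A : (Fin 7 → ℝ) →ₗ[ℝ] (Fin 7 → ℝ))
    (hA : ∀ u v w : Fin 7 → ℝ, phi0 (A u) (A v) (A w) = phi0 u v w) :
    ∀ u v w x : Fin 7 → ℝ, psi0 (A u) (A v) (A w) (A x) = psi0 u v w x := by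
  classical
  have gA : ∀ u v c0 c1 c2 c3 c4 c5 c6 : Fin 7 → ℝ,
      gammaf (A u) (A v) (A c0) (A c1) (A c2) (A c3) (A c4) (A c5) (A c6)
        = gammaf u v c0 c1 c2 c3 c4 c5 c6 := by
    intro u v c0 c1 c2 c3 c4 c5 c6
    simp only [gammaf, alphaf, hA]
  set b : Module.Basis (Fin 7) ℝ (Fin 7 → ℝ) := Pi.basisFun ℝ (Fin 7) with hb
  have hbe : ∀ i, b i = ee i := by
    intro i; funext j
    simp [hb, ee, Pi.single_apply]
  set d : ℝ := b.det (fun i => A (ee i)) with hd0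
  have key : ∀ u v : Fin 7 → ℝ, dotp u v = d * dotp (A u) (A v) := by
    intro u v
    have h1 := (gammaAlt (A u) (A v)).eq_smul_basis_det b
    have h2 := DFunLike.congr_fun h1 (fun i => A (ee i))
    simp only [AlternatingMap.smul_apply, smul_eq_mul] at h2
    have h3 : gammaAlt (A u) (A v) (fun i => A (ee i))
        = gammaf (A u) (A v) (A (ee 0)) (A (ee 1)) (A (ee 2)) (A (ee 3)) (A (ee 4)) (A (ee 5)) (A (ee 6)) := rfl
    have h4 : gammaAlt (A u) (A v) ⇑b
        = gammaf (A u) (A v) (ee 0) (ee 1) (ee 2) (ee 3) (ee 4) (ee 5) (ee 6) := by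
      rw [gammaAlt_apply]
      simp only [hbe]
    rw [h3, h4, gA, gamma_basis, gamma_basis] at h2
    rw [← hd0] at h2
    linarith
  have hdQ0 : d * dotp (A (ee 0)) (A (ee 0)) = 1 := by
    have h := key (ee 0) (ee 0); rw [dotp_ee00] at h; linarith
  have hdQ1 : d * dotp (A (ee 1)) (A (ee 1)) = 1 := by
    have h := key (ee 1) (ee 1); rw [dotp_ee11] at h; linarith
  have hdR : d * dotp (A (ee 0)) (A (ee 1)) = 0 := by
    have h := key (ee 0) (ee 1); rw [dotp_ee01] at h; linarith
  have hdP : d * dotp (A (ee 2)) (A (ee 2)) = 1 := by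
    have h := key (ee 2) (ee 2); rw [dotp_ee22] at h; linarith
  have hdpos : 0 < d := by
    nlinarith [dotp_self_nonneg (A (ee 0)), hdQ0]
  -- injectivity and surjectivity
  have hzero : ∀ x : Fin 7 → ℝ, A x = 0 → x = 0 := by
    intro x hx
    have h := key x x
    rw [hx] at h
    have hz0 : dotp (0 : Fin 7 → ℝ) (0 : Fin 7 → ℝ) = 0 := by simp [dotp]
    rw [hz0, mul_zero] at h
    exact dotp_self_eq_zero h
  have hinj : Function.Injective A := by
    intro x y hxy
    have : A (x - y) = 0 := by rw [map_sub, hxy, sub_self]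
    have := hzero _ this
    exact sub_eq_zero.mp this
  have hsurj : Function.Surjective A := LinearMap.injective_iff_surjective.mp hinj
  -- cross compatibility
  have hcr : ∀ u v : Fin 7 → ℝ, crossp (A u) (A v) = d • A (crossp u v) := by
    intro u v
    have horto : ∀ w, dotp (crossp (A u) (A v) - d • A (crossp u v)) w = 0 := by
      intro w
      obtain ⟨w', rfl⟩ := hsurj w
      have t1 : dotp (crossp (A u) (A v)) (A w') = phi0 u v w' := by
        rw [dotp_cross, hA]
      have t2 : d * dotp (A (crossp u v)) (A w') = phi0 u v w' := by
        rw [← key, dotp_cross]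
      rw [dotp_sub_left, dotp_smul_left, t1, t2]
      ring
    have hz := horto (crossp (A u) (A v) - d • A (crossp u v))
    have := dotp_self_eq_zero hz
    exact sub_eq_zero.mp this
  -- d = 1
  have hd3 : d ^ 3 = 1 := by
    have hl := lagrange (A (ee 0)) (A (ee 1))
    have hc := hcr (ee 0) (ee 1)
    rw [crossp_ee01] at hc
    rw [hc] at hl
    rw [dotp_smul_left] at hl
    have hsm : dotp (A (ee 2)) (d • A (ee 2)) = d * dotp (A (ee 2)) (A (ee 2)) := by
      simp only [dotp, Pi.smul_apply, smul_eq_mul]; ring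
    rw [hsm] at hl
    linear_combination (d ^ 2) * hl - d ^ 3 * hdP + (d * dotp (A (ee 1)) (A (ee 1))) * hdQ0
      + hdQ1 - (d * dotp (A (ee 0)) (A (ee 1))) * hdR
  have hd1 : d = 1 := by
    have hfac : (d - 1) * (d ^ 2 + d + 1) = 0 := by linear_combination hd3
    rcases mul_eq_zero.mp hfac with h | h
    · linarith
    · nlinarith [hdpos]
  -- conclude
  have metric : ∀ a b' : Fin 7 → ℝ, dotp (A a) (A b') = dotp a b' := by
    intro a b'
    have := key a b'
    rw [hd1] at this
    linarith
  have crossA : ∀ a b' : Fin 7 → ℝ, crossp (A a) (A b') = A (crossp a b') := by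
    intro a b'
    have := hcr a b'
    rw [hd1, one_smul] at this
    exact this
  intro u v w x
  rw [psi_ident, psi_ident, crossA, crossA, metric, metric, metric, metric, metric]
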